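/- Let X be a totally ordered set with the least upper bound property and let S ⊆ X be well-ordered and discrete (containing none of its limit points). Then for any ordinal α less than the order type of S, the α-th element of S equals the (α+1)-st element (in 0-indexing) of the closure of S, i.e., S[α] = S̄[-1+(α+1)]. -/

import Mathlib

open Ordinal

theorem discrete_closure_index_shift {X : Type*}
    [ConditionallyCompleteLinearOrder X] [TopologicalSpace X] [OrderTopology X]
    (S : Set X)
    (hdisc : ∀ x ∈ S, x ∉ closure (S \ {x}))
    (τ σ : Ordinal)
    (e : S ≃o Set.Iio τ) (f : (closure S : Set X) ≃o Set.Iio σ) :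
    ∀ α : Ordinal, ∀ hα : α < τ, ∃ γ : Ordinal, 1 + γ = α + 1 ∧
      ∃ hγ : γ < σ, (↑(e.symm ⟨α, hα⟩) : X) = ↑(f.symm ⟨γ, hγ⟩) := by
  classical
  have hsub : S ⊆ closure S := subset_closure
  -- inclusion of S (indexed by ordinals) into the closure
  set ι : Set.Iio τ → (closure S : Set X) :=
    fun b => ⟨(e.symm b : X), hsub (e.symm b).2⟩ with hιdef
  have hιmono : ∀ a b : Set.Iio τ, a < b → (ι a : X) < (ι b : X) := by
    intro a b hab
    exact Subtype.coe_lt_coe.mpr (e.symm.strictMono hab)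
  -- auxiliary ordinal fact : 1 + γ ≤ γ + 1
  have one_add_le : ∀ γ : Ordinal, 1 + γ ≤ γ + 1 := by
    intro γ
    rcases lt_or_ge γ ω with h | h
    · obtain ⟨n, rfl⟩ := Ordinal.lt_omega0.mp h
      rw [← Nat.cast_one, ← Nat.cast_add, ← Nat.cast_add, Nat.add_comm]
    · rw [Ordinal.one_add_of_omega0_le h]
      exact le_self_add
  -- if x < y in the closure and no element of S lies strictly between them,
  -- then y has successor index of x
  have fsucc : ∀ x y : (closure S : Set X), (x : X) < (y : X) →
      (∀ s ∈ S, ¬((x : X) < s ∧ s < (y : X))) →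
      ((f y : Ordinal)) = (f x : Ordinal) + 1 := by
    intro x y hxy hno
    have hfxy : f x < f y := f.strictMono (Subtype.coe_lt_coe.mp hxy)
    have h1 : (f x : Ordinal) + 1 ≤ (f y : Ordinal) := by
      rw [Ordinal.add_one_eq_succ, Order.succ_le_iff]
      exact hfxy
    rcases eq_or_lt_of_le h1 with h | h
    · exact h.symm
    · exfalso
      set m : Set.Iio σ := ⟨(f x : Ordinal) + 1, lt_trans h (f y).2⟩ with hm
      have hfxm : f x < m := by
        rw [← Subtype.coe_lt_coe]
        exact Order.lt_succ _
      have hmfy : m < f y := by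
        rw [← Subtype.coe_lt_coe]
        exact h
      have hx : (x : X) < ((f.symm m : (closure S : Set X)) : X) := by
        have : x < f.symm m := by
          rw [← f.symm_apply_apply x]
          exact f.symm.strictMono hfxm
        exact Subtype.coe_lt_coe.mpr this
      have hy : ((f.symm m : (closure S : Set X)) : X) < (y : X) := by
        have : f.symm m < y := by
          rw [← f.symm_apply_apply y]
          exact f.symm.strictMono hmfy
        exact Subtype.coe_lt_coe.mpr this
      have hzc : ((f.symm m : (closure S : Set X)) : X) ∈ closure S := (f.symm m).2
      obtain ⟨s, hs⟩ := mem_closure_iff.mp hzc (Set.Ioo (x : X) (y : X)) isOpen_Ioo ⟨hx, hy⟩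
      exact hno s hs.2 ⟨hs.1.1, hs.1.2⟩
  intro α
  induction α using Ordinal.induction with
  | h α IH =>
  intro hα
  rcases Ordinal.zero_or_succ_or_isSuccLimit α with rfl | ⟨β, rfl⟩ | hlim
  · -- zero case
    set x0 : (closure S : Set X) := ι ⟨0, hα⟩ with hx0
    have hσpos : (0 : Ordinal) < σ := lt_of_le_of_lt (zero_le) (f x0).2
    have hle : ∀ w ∈ closure S, (x0 : X) ≤ w := by
      have hcl : closure S ⊆ Set.Ici (x0 : X) := by
        apply closure_minimal _ isClosed_Ici
        intro s hs
        have h0 : (⟨0, hα⟩ : Set.Iio τ) ≤ e ⟨s, hs⟩ := by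
          rw [← Subtype.coe_le_coe]
          exact zero_le
        have := e.symm.monotone h0
        rw [e.symm_apply_apply] at this
        exact Subtype.coe_le_coe.mpr this
      exact fun w hw => hcl hw
    have hfx0 : f x0 = ⟨0, hσpos⟩ := by
      apply le_antisymm
      · have : x0 ≤ f.symm ⟨0, hσpos⟩ :=
          Subtype.coe_le_coe.mp (hle _ (f.symm ⟨0, hσpos⟩).2)
        have h2 := f.monotone this
        rwa [f.apply_symm_apply] at h2
      · rw [← Subtype.coe_le_coe]
        exact zero_le
    refine ⟨0, by simp, hσpos, ?_⟩
    have : f.symm ⟨0, hσpos⟩ = x0 := by rw [← hfx0, f.symm_apply_apply]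
    rw [this]
  · -- successor case
    have hβ : β < τ := lt_trans (Order.lt_succ β) hα
    obtain ⟨γ₀, hγ₀eq, hγ₀σ, heq⟩ := IH β (Order.lt_succ β) hβ
    set x : (closure S : Set X) := ι ⟨β, hβ⟩ with hx
    set y : (closure S : Set X) := ι ⟨Order.succ β, hα⟩ with hy
    have hfx : f x = ⟨γ₀, hγ₀σ⟩ := by
      have : f.symm ⟨γ₀, hγ₀σ⟩ = x := Subtype.ext heq.symm
      rw [← this, f.apply_symm_apply]
    have hxy : (x : X) < (y : X) := by
      apply hιmono
      rw [← Subtype.coe_lt_coe]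
      exact Order.lt_succ β
    have hno : ∀ s ∈ S, ¬((x : X) < s ∧ s < (y : X)) := by
      rintro s hs ⟨h1, h2⟩
      set b : Set.Iio τ := e ⟨s, hs⟩ with hb
      have hsb : (e.symm b : X) = s := by rw [hb, e.symm_apply_apply]
      have hlt1 : (⟨β, hβ⟩ : Set.Iio τ) < b := by
        have : e.symm ⟨β, hβ⟩ < e.symm b := by
          apply Subtype.coe_lt_coe.mp
          rw [hsb]; exact h1
        have := e.symm.strictMono.lt_iff_lt.mp this
        exact this
      have hlt2 : b < (⟨Order.succ β, hα⟩ : Set.Iio τ) := by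
        have : e.symm b < e.symm ⟨Order.succ β, hα⟩ := by
          apply Subtype.coe_lt_coe.mp
          rw [hsb]; exact h2
        exact e.symm.strictMono.lt_iff_lt.mp this
      rw [← Subtype.coe_lt_coe] at hlt1 hlt2
      exact absurd hlt2 (not_lt.mpr (Order.succ_le_of_lt hlt1))
    have hfy : (f y : Ordinal) = γ₀ + 1 := by
      rw [fsucc x y hxy hno, hfx]
    refine ⟨γ₀ + 1, ?_, ?_, ?_⟩
    · rw [← add_assoc, hγ₀eq, Ordinal.add_one_eq_succ, Ordinal.add_one_eq_succ, Ordinal.add_one_eq_succ]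
    · rw [← hfy]; exact (f y).2
    · have hmem : γ₀ + 1 < σ := by rw [← hfy]; exact (f y).2
      have : f y = ⟨γ₀ + 1, hmem⟩ := Subtype.ext hfy
      have h2 : f.symm ⟨γ₀ + 1, hmem⟩ = y := by rw [← this, f.symm_apply_apply]
      rw [h2]
  · -- limit case
    have hβτ : ∀ β < α, β < τ := fun β h => lt_trans h hα
    set sα : X := (e.symm ⟨α, hα⟩ : X) with hsα
    set T : Set X := {x | x ∈ S ∧ x < sα} with hT
    have hmemT : ∀ β (h : β < α), (e.symm ⟨β, hβτ β h⟩ : X) ∈ T := by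
      intro β h
      refine ⟨(e.symm ⟨β, hβτ β h⟩).2, ?_⟩
      apply Subtype.coe_lt_coe.mpr
      apply e.symm.strictMono
      rw [← Subtype.coe_lt_coe]
      exact h
    have Tne : T.Nonempty := ⟨_, hmemT 0 hlim.pos⟩
    have Tbdd : BddAbove T := ⟨sα, fun t ht => le_of_lt ht.2⟩
    set p : X := sSup T with hp
    have hlub : IsLUB T p := isLUB_csSup Tne Tbdd
    have hpclT : p ∈ closure T := hlub.mem_closure Tne
    have hpcl : p ∈ closure S := closure_mono (fun t ht => ht.1) hpclT
    have hple : p ≤ sα := csSup_le Tne fun t ht => le_of_lt ht.2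
    have hpne : p ≠ sα := by
      intro hcontra
      apply hdisc sα (e.symm ⟨α, hα⟩).2
      have hTsub : T ⊆ S \ {sα} := fun t ht => ⟨ht.1, ne_of_lt ht.2⟩
      have := closure_mono hTsub hpclT
      rwa [hcontra] at this
    have hplt : p < sα := lt_of_le_of_ne hple hpne
    set P : (closure S : Set X) := ⟨p, hpcl⟩ with hP
    set y : (closure S : Set X) := ι ⟨α, hα⟩ with hy
    have hyval : (y : X) = sα := rfl
    have hno : ∀ s ∈ S, ¬((P : X) < s ∧ s < (y : X)) := by
      rintro s hs ⟨h1, h2⟩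
      rw [hyval] at h2
      have hsT : s ∈ T := ⟨hs, h2⟩
      exact absurd (hlub.1 hsT) (not_le.mpr h1)
    have hfval : (f y : Ordinal) = (f P : Ordinal) + 1 := fsucc P y hplt hno
    -- index of each earlier element
    have hidx : ∀ β (h : β < α), ∃ γβ : Ordinal, 1 + γβ = β + 1 ∧
        ∃ hγβ : γβ < σ, f (ι ⟨β, hβτ β h⟩) = ⟨γβ, hγβ⟩ := by
      intro β h
      obtain ⟨γβ, h1, h2, h3⟩ := IH β h (hβτ β h)
      refine ⟨γβ, h1, h2, ?_⟩
      have : f.symm ⟨γβ, h2⟩ = ι ⟨β, hβτ β h⟩ := Subtype.ext h3.symm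
      rw [← this, f.apply_symm_apply]
    have hfP : (f P : Ordinal) = α := by
      apply le_antisymm
      · by_contra hcon
        push_neg at hcon
        have hασ : α < σ := lt_trans hcon (f P).2
        set z : (closure S : Set X) := f.symm ⟨α, hασ⟩ with hz
        have hzP : (z : X) < p := by
          show (z : X) < (P : X)
          apply Subtype.coe_lt_coe.mpr
          have : f z < f P := by
            rw [hz, f.apply_symm_apply, ← Subtype.coe_lt_coe]
            exact hcon
          exact f.strictMono.lt_iff_lt.mp this
        obtain ⟨t, htT, hzt⟩ := exists_lt_of_lt_csSup Tne hzP
        set b : Set.Iio τ := e ⟨t, htT.1⟩ with hb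
        have htb : (e.symm b : X) = t := by rw [hb, e.symm_apply_apply]
        have hbα : (b : Ordinal) < α := by
          have : e.symm b < e.symm ⟨α, hα⟩ := by
            apply Subtype.coe_lt_coe.mp
            rw [htb]; exact htT.2
          exact e.symm.strictMono.lt_iff_lt.mp this
        obtain ⟨γβ, hγeq, hγσ, hγf⟩ := hidx b hbα
        have hbeq : (⟨(b : Ordinal), hβτ b hbα⟩ : Set.Iio τ) = b := Subtype.ext rfl
        have hικ : (ι ⟨(b : Ordinal), hβτ b hbα⟩ : X) = t := by
          show (e.symm ⟨(b : Ordinal), hβτ b hbα⟩ : X) = t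
          rw [hbeq, htb]
        have hzlt : z < ι ⟨(b : Ordinal), hβτ b hbα⟩ := by
          apply Subtype.coe_lt_coe.mp
          rw [hικ]; exact hzt
        have : f z < f (ι ⟨(b : Ordinal), hβτ b hbα⟩) := f.strictMono hzlt
        rw [hz, f.apply_symm_apply, hγf, ← Subtype.coe_lt_coe] at this
        have hγle : γβ ≤ α := by
          calc γβ ≤ 1 + γβ := le_add_self
          _ = (b : Ordinal) + 1 := hγeq
          _ = Order.succ (b : Ordinal) := Ordinal.add_one_eq_succ _
          _ ≤ α := Order.succ_le_of_lt hbα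
        exact absurd this (not_lt.mpr hγle)
      · rw [hlim.le_iff_forall_le]
        intro β hβα
        obtain ⟨γβ, hγeq, hγσ, hγf⟩ := hidx β hβα
        have hβα' : Order.succ β < α := hlim.succ_lt hβα
        have hsuccT : (e.symm ⟨Order.succ β, hβτ _ hβα'⟩ : X) ∈ T := hmemT _ hβα'
        have hlt : (ι ⟨β, hβτ β hβα⟩ : X) < p := by
          calc (ι ⟨β, hβτ β hβα⟩ : X) < (e.symm ⟨Order.succ β, hβτ _ hβα'⟩ : X) := by
                apply hιmono
                rw [← Subtype.coe_lt_coe]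
                exact Order.lt_succ β
          _ ≤ p := hlub.1 hsuccT
        have : f (ι ⟨β, hβτ β hβα⟩) < f P := f.strictMono (Subtype.coe_lt_coe.mp hlt)
        rw [hγf, ← Subtype.coe_lt_coe] at this
        have hβγ : β ≤ γβ := by
          have h1 : β < γβ + 1 := by
            calc β < β + 1 := by rw [Ordinal.add_one_eq_succ]; exact Order.lt_succ β
            _ = 1 + γβ := hγeq.symm
            _ ≤ γβ + 1 := one_add_le γβ
          exact Order.lt_succ_iff.mp (by rwa [Ordinal.add_one_eq_succ] at h1)
        exact le_of_lt (lt_of_le_of_lt hβγ this)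
    have hωα : ω ≤ α := Ordinal.omega0_le_of_isSuccLimit hlim
    have hγσ : α + 1 < σ := by
      have := (f y).2
      rwa [hfval, hfP] at this
    refine ⟨α + 1, ?_, hγσ, ?_⟩
    · rw [← add_assoc, Ordinal.one_add_of_omega0_le hωα]
    · have hfy : f y = ⟨α + 1, hγσ⟩ := Subtype.ext (by rw [hfval, hfP])
      have : f.symm ⟨α + 1, hγσ⟩ = y := by rw [← hfy, f.symm_apply_apply]
      rw [this]
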